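/- Let A be a fixed real m×n matrix with rank(A) = k, and let G be a random real n×n matrix whose entries are independent standard Gaussian random variables. Then, with probability 1, the following holds: G is invertible, and for every factorization G = Q R with Q an n×n orthogonal matrix and R an n×n upper triangular matrix, the matrix B = A·Q has rank k and the submatrix B(:,1:k) of its first k columns has rank k (i.e., the first k columns of B are linearly independent). -/

import Mathlib

open Matrix MeasureTheory ProbabilityTheory

noncomputable section

namespace GaussianQRAux

/-- Evaluation of a multivariate polynomial is measurable. -/
lemma measurable_eval {ι : Type*} (p : MvPolynomial ι ℝ) :
    Measurable fun x : ι → ℝ => MvPolynomial.eval x p := by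
  classical
  simp only [MvPolynomial.eval_eq]
  exact Finset.measurable_sum _ fun d _ =>
    (measurable_const.mul (Finset.measurable_prod _ fun i _ =>
      ((measurable_pi_apply i).pow_const _)))

lemma gaussian_null_of_finite {s : Set ℝ} (hs : s.Finite) : gaussianReal 0 1 s = 0 :=
  gaussianReal_absolutelyContinuous 0 one_ne_zero (hs.measure_zero _)

/-- Zero set of a nonzero polynomial is null for product Gaussians, `Fin N` version. -/
lemma null_fin : ∀ (N : ℕ) (p : MvPolynomial (Fin N) ℝ), p ≠ 0 →
    (Measure.pi fun _ : Fin N => gaussianReal 0 1)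
      {x | MvPolynomial.eval x p = 0} = 0 := by
  intro N
  induction N with
  | zero =>
    intro p hp
    obtain ⟨c, rfl⟩ := MvPolynomial.C_surjective (Fin 0) p
    have hc : c ≠ 0 := fun h => hp (by rw [h, map_zero])
    convert measure_empty
    · ext x; simp [hc]
    · infer_instance
  | succ N ih =>
    intro p hp
    set γ : Measure ℝ := gaussianReal 0 1 with hγ
    set Z : Set (Fin (N+1) → ℝ) := {x | MvPolynomial.eval x p = 0} with hZdef
    have hZ : MeasurableSet Z := (measurable_eval p) (measurableSet_singleton 0)
    set e := MeasurableEquiv.piFinSuccAbove (fun _ : Fin (N+1) => ℝ) 0 with he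
    have hmp : MeasurePreserving e.symm
        (γ.prod (Measure.pi fun _ : Fin N => γ))
        (Measure.pi fun _ : Fin (N+1) => γ) :=
      (measurePreserving_piFinSuccAbove (fun _ : Fin (N+1) => γ) 0).symm
    have h1 : (Measure.pi fun _ : Fin (N+1) => γ) Z
        = (γ.prod (Measure.pi fun _ : Fin N => γ)) (e.symm ⁻¹' Z) :=
      (hmp.measure_preimage hZ.nullMeasurableSet).symm
    rw [h1]
    have hs : MeasurableSet (e.symm ⁻¹' Z) := e.symm.measurable hZ
    rw [← Measure.prod_swap, Measure.map_apply measurable_swap hs]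
    rw [Measure.measure_prod_null (measurable_swap hs)]
    -- key: sections
    have hP : MvPolynomial.finSuccEquiv ℝ N p ≠ 0 := fun h =>
      hp ((MvPolynomial.finSuccEquiv ℝ N).injective (by simp [h]))
    have hlead : (MvPolynomial.finSuccEquiv ℝ N p).leadingCoeff ≠ 0 :=
      Polynomial.leadingCoeff_ne_zero.mpr hP
    have hae : ∀ᵐ x ∂(Measure.pi fun _ : Fin N => γ),
        MvPolynomial.eval x (MvPolynomial.finSuccEquiv ℝ N p).leadingCoeff ≠ 0 := by
      have := ih _ hlead
      rw [ae_iff]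
      simpa only [ne_eq, not_not] using this
    filter_upwards [hae] with x hx
    have hq : (MvPolynomial.finSuccEquiv ℝ N p).map (MvPolynomial.eval x) ≠ 0 := by
      intro h
      apply hx
      have h2 : ((MvPolynomial.finSuccEquiv ℝ N p).map (MvPolynomial.eval x)).coeff
          (MvPolynomial.finSuccEquiv ℝ N p).natDegree = 0 := by rw [h]; simp
      rw [Polynomial.coeff_map] at h2
      exact h2
    have hfin : {y : ℝ | Polynomial.eval y
        ((MvPolynomial.finSuccEquiv ℝ N p).map (MvPolynomial.eval x)) = 0}.Finite :=
      Polynomial.finite_setOf_isRoot hq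
    have hset : (Prod.mk x ⁻¹' (Prod.swap ⁻¹' (e.symm ⁻¹' Z)))
        = {y : ℝ | Polynomial.eval y
          ((MvPolynomial.finSuccEquiv ℝ N p).map (MvPolynomial.eval x)) = 0} := by
      ext y
      simp only [Set.mem_preimage, Set.mem_setOf_eq, hZdef, Prod.swap_prod_mk]
      have : e.symm (y, x) = Fin.cons y x := by
        simp [he, MeasurableEquiv.piFinSuccAbove, Fin.insertNthEquiv,
          Fin.insertNth_zero']
      rw [this, MvPolynomial.eval_eq_eval_mv_eval']
    show γ (Prod.mk x ⁻¹' (Prod.swap ⁻¹' (e.symm ⁻¹' Z))) = 0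
    rw [hset]
    exact gaussian_null_of_finite hfin


/-- General finite index version. -/
lemma null_fintype {ι : Type*} [Fintype ι] (p : MvPolynomial ι ℝ) (hp : p ≠ 0) :
    (Measure.pi fun _ : ι => gaussianReal 0 1) {x | MvPolynomial.eval x p = 0} = 0 := by
  classical
  set e := (Fintype.equivFin ι).symm with hedef
  have hmp := measurePreserving_piCongrLeft (fun _ : ι => gaussianReal 0 1) e
  have hZ : MeasurableSet {x : ι → ℝ | MvPolynomial.eval x p = 0} :=
    (measurable_eval p) (measurableSet_singleton 0)
  rw [← hmp.map_eq, Measure.map_apply hmp.measurable hZ]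
  have hpre : (⇑(MeasurableEquiv.piCongrLeft (fun _ : ι => ℝ) e)) ⁻¹'
      {x : ι → ℝ | MvPolynomial.eval x p = 0}
      = {x : Fin (Fintype.card ι) → ℝ |
          MvPolynomial.eval x (MvPolynomial.rename e.symm p) = 0} := by
    ext x
    simp only [Set.mem_preimage, Set.mem_setOf_eq, MvPolynomial.eval_rename]
    have hfun : (⇑(MeasurableEquiv.piCongrLeft (fun _ : ι => ℝ) e) x) = x ∘ e.symm := by
      funext i
      conv_lhs => rw [← e.apply_symm_apply i]
      rw [MeasurableEquiv.piCongrLeft_apply_apply]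
      rfl
    rw [hfun]
  rw [hpre]
  exact null_fin _ _ (fun h => hp (by
    have := congrArg (MvPolynomial.rename e) h
    rwa [MvPolynomial.rename_rename, map_zero, (by ext i : 2; simp :
      (MvPolynomial.rename (e ∘ e.symm) p) = p)] at this))

/-- Measure preserving uncurrying for product measures. -/
lemma mp_curry {ι κ : Type*} [Fintype ι] [Fintype κ] (μ : Measure ℝ)
    [IsProbabilityMeasure μ] :
    MeasurePreserving (fun (x : ι × κ → ℝ) (i : ι) (j : κ) => x (i, j))
      (Measure.pi fun _ : ι × κ => μ) (Measure.pi fun _ : ι => Measure.pi fun _ : κ => μ) := by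
  constructor
  · exact measurable_pi_lambda _ fun i => measurable_pi_lambda _ fun j =>
      measurable_pi_apply _
  · symm
    refine Measure.pi_eq_generateFrom
      (C := fun _ : ι => Set.pi Set.univ ''
        Set.pi Set.univ fun _ : κ => {s : Set ℝ | MeasurableSet s})
      (fun _ => generateFrom_pi) (fun _ => isPiSystem_pi)
      (fun _ => ⟨fun _ => Set.univ,
        fun _ => ⟨fun _ => Set.univ, by simp, by simp⟩,
        fun _ => by simp,
        Set.iUnion_const _⟩)
      (fun s hs => ?_)
    choose t ht hts using hs
    have htm : ∀ i j, MeasurableSet (t i j) := fun i j => Set.mem_univ_pi.mp (ht i) j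
    have hsm : ∀ i, MeasurableSet (s i) := fun i => by
      rw [← hts i]; exact MeasurableSet.univ_pi (htm i)
    rw [Measure.map_apply (measurable_pi_lambda _ fun i => measurable_pi_lambda _
      fun j => measurable_pi_apply _) (MeasurableSet.univ_pi hsm)]
    have hpre : ((fun (x : ι × κ → ℝ) (i : ι) (j : κ) => x (i, j)) ⁻¹'
        Set.univ.pi s) = Set.univ.pi (fun q : ι × κ => t q.1 q.2) := by
      ext x
      simp only [Set.mem_preimage, Set.mem_pi, Set.mem_univ, true_implies]
      constructor
      · intro h q
        have := h q.1
        rw [← hts q.1] at this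
        simpa using this q.2
      · intro h i
        rw [← hts i]
        intro j _
        exact h (i, j)
    rw [hpre, Measure.pi_pi]
    rw [Fintype.prod_prod_type]
    exact Finset.prod_congr rfl fun i _ => by rw [← hts i, Measure.pi_pi]

/-- Nested (matrix) version of the null lemma. -/
lemma nested_null {n : ℕ} (p : MvPolynomial (Fin n × Fin n) ℝ) (hp : p ≠ 0) :
    (Measure.pi fun _ : Fin n => Measure.pi fun _ : Fin n => gaussianReal 0 1)
      {g : Fin n → Fin n → ℝ | MvPolynomial.eval (fun q => g q.1 q.2) p = 0} = 0 := by
  have hmp := mp_curry (ι := Fin n) (κ := Fin n) (gaussianReal 0 1)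
  have hmeas : MeasurableSet {g : Fin n → Fin n → ℝ |
      MvPolynomial.eval (fun q => g q.1 q.2) p = 0} := by
    have : Measurable fun (g : Fin n → Fin n → ℝ) (q : Fin n × Fin n) => g q.1 q.2 :=
      measurable_pi_lambda _ fun q =>
        (measurable_pi_apply q.2).comp (measurable_pi_apply q.1)
    exact ((measurable_eval p).comp this) (measurableSet_singleton 0)
  rw [← hmp.map_eq, Measure.map_apply hmp.measurable hmeas]
  convert null_fintype p hp using 2
  ext x; rfl


/-- A square real matrix of full rank has unit determinant. -/
lemma isUnit_det_of_rank_eq {k : ℕ} (S : Matrix (Fin k) (Fin k) ℝ) (h : S.rank = k) :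
    IsUnit S.det := by
  rw [← Matrix.isUnit_iff_isUnit_det, ← Matrix.mulVec_surjective_iff_isUnit]
  have hfr : Module.finrank ℝ (LinearMap.range S.mulVecLin) = k := h
  have htop : LinearMap.range S.mulVecLin = ⊤ :=
    Submodule.eq_top_of_finrank_eq (by rw [hfr, Module.finrank_fin_fun])
  have hsurj : Function.Surjective S.mulVecLin := LinearMap.range_eq_top.mp htop
  intro y
  obtain ⟨x, hx⟩ := hsurj y
  exact ⟨x, hx⟩

/-- Deterministic part of the theorem. -/
lemma deterministic {m n k : ℕ} (A : Matrix (Fin m) (Fin n) ℝ) (hkn : k ≤ n)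
    (hA : A.rank = k) (g : Fin n → Fin n → ℝ)
    (hdet : (Matrix.of g).det ≠ 0)
    (hr : (A * (Matrix.of g).submatrix id (Fin.castLE hkn)).rank = k) :
    IsUnit (Matrix.of g) ∧
    ∀ Q R : Matrix (Fin n) (Fin n) ℝ, Qᵀ * Q = 1 →
      (∀ i j : Fin n, (j : ℕ) < (i : ℕ) → R i j = 0) →
      Matrix.of g = Q * R →
      (A * Q).rank = k ∧ ((A * Q).submatrix id (Fin.castLE hkn)).rank = k := by
  have hGunit : IsUnit (Matrix.of g) :=
    (Matrix.isUnit_iff_isUnit_det _).mpr (isUnit_iff_ne_zero.mpr hdet)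
  refine ⟨hGunit, fun Q R hQ hRtri hQR => ?_⟩
  have hQunit : IsUnit Q := (Matrix.isUnit_iff_isUnit_det Q).mpr (Matrix.isUnit_det_of_left_inverse hQ)
  have hQdet : IsUnit Q.det := (Matrix.isUnit_iff_isUnit_det Q).mp hQunit
  have h1 : (A * Q).rank = k := by
    rw [Matrix.rank_mul_eq_left_of_isUnit_det Q A hQdet, hA]
  have hRdet : IsUnit R.det := by
    have hd : (Matrix.of g).det = Q.det * R.det := by rw [hQR, Matrix.det_mul]
    exact isUnit_of_mul_isUnit_right (show IsUnit (Q.det * R.det) by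
      rw [← hd]; exact isUnit_iff_ne_zero.mpr hdet)
  have hRtri' : R.BlockTriangular id := fun i j hij => hRtri i j hij
  have hdiag : ∀ i : Fin n, R i i ≠ 0 := by
    have hdetR : R.det = ∏ i, R i i := Matrix.det_of_upperTriangular hRtri'
    intro i hi
    apply (isUnit_iff_ne_zero.mp hRdet)
    rw [hdetR]
    exact Finset.prod_eq_zero (Finset.mem_univ i) hi
  set cst : Fin k → Fin n := Fin.castLE hkn with hcst
  set R₁ : Matrix (Fin k) (Fin k) ℝ := R.submatrix cst cst with hR₁
  have hR₁tri : R₁.BlockTriangular id := by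
    intro i j hij
    exact hRtri (cst i) (cst j) hij
  have hR₁det : IsUnit R₁.det := by
    rw [Matrix.det_of_upperTriangular hR₁tri]
    rw [isUnit_iff_ne_zero, Finset.prod_ne_zero_iff]
    exact fun i _ => hdiag (cst i)
  -- key identity
  have hinj : Function.Injective cst := Fin.castLE_injective hkn
  have key : (Matrix.of g).submatrix id cst = (Q.submatrix id cst) * R₁ := by
    ext i j
    rw [hQR]
    simp only [Matrix.submatrix_apply, Matrix.mul_apply, id_eq]
    calc ∑ l : Fin n, Q i l * R l (cst j)
        = ∑ l ∈ Finset.univ.map ⟨cst, hinj⟩, Q i l * R l (cst j) := by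
          symm
          apply Finset.sum_subset (Finset.subset_univ _)
          intro l _ hl
          have hlk : ¬ ((l : ℕ) < k) := by
            intro hlt
            exact hl (Finset.mem_map.mpr ⟨⟨(l : ℕ), hlt⟩, Finset.mem_univ _, by
              simp [cst, Fin.ext_iff]⟩)
          have hlt : ((cst j : Fin n) : ℕ) < (l : ℕ) := by
            simp only [cst, Fin.coe_castLE]
            exact lt_of_lt_of_le j.isLt (le_of_not_gt hlk)
          rw [hRtri l (cst j) hlt, mul_zero]
      _ = ∑ x : Fin k, Q i (cst x) * R (cst x) (cst j) := by
          rw [Finset.sum_map]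
          simp
      _ = ∑ x : Fin k, Q i (cst x) * R₁ x j := rfl
  have e1 : (A * Q).submatrix id cst = A * Q.submatrix id cst := by
    ext i j
    simp [Matrix.mul_apply]
  have e2 : A * (Matrix.of g).submatrix id cst = (A * Q.submatrix id cst) * R₁ := by
    rw [key, ← Matrix.mul_assoc]
  have h2 : ((A * Q).submatrix id cst).rank = k := by
    rw [e1]
    have := Matrix.rank_mul_eq_left_of_isUnit_det R₁ (A * Q.submatrix id cst) hR₁det
    rw [← this, ← e2, hr]
  exact ⟨h1, h2⟩


/-- There is a matrix whose first `k` columns are mapped by `A` to independent vectors. -/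
lemma exists_good {m n k : ℕ} (A : Matrix (Fin m) (Fin n) ℝ) (hkn : k ≤ n)
    (hA : A.rank = k) :
    ∃ g₀ : Fin n → Fin n → ℝ,
      (A * (Matrix.of g₀).submatrix id (Fin.castLE hkn)).rank = k := by
  have hfr : Module.finrank ℝ (LinearMap.range A.mulVecLin) = k := hA
  let b : Module.Basis (Fin k) ℝ (LinearMap.range A.mulVecLin) :=
    Module.finBasisOfFinrankEq ℝ _ hfr
  have hmem : ∀ i, ((b i : Fin m → ℝ)) ∈ LinearMap.range A.mulVecLin := fun i => (b i).2
  choose u hu using fun i => LinearMap.mem_range.mp (hmem i)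
  have hind : LinearIndependent ℝ fun i => A.mulVec (u i) := by
    have hcomp : (fun i => A.mulVec (u i)) =
        (Submodule.subtype (LinearMap.range A.mulVecLin)) ∘ b := by
      funext i
      simp only [Function.comp_apply, Submodule.coe_subtype]
      rw [← Matrix.mulVecLin_apply, hu i]
    rw [hcomp]
    exact b.linearIndependent.map' _ (Submodule.ker_subtype _)
  refine ⟨fun (i j : Fin n) => if h : (j : ℕ) < k then u ⟨(j : ℕ), h⟩ i else 0, ?_⟩
  set N₁ := A * (Matrix.of fun (i j : Fin n) =>
    if h : (j : ℕ) < k then u ⟨(j : ℕ), h⟩ i else 0).submatrix id (Fin.castLE hkn) with hN₁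
  have hNt : ∀ (ii : Fin m) (jj : Fin k), N₁ ii jj = A.mulVec (u jj) ii := by
    intro ii jj
    simp only [hN₁, Matrix.mul_apply, Matrix.submatrix_apply, Matrix.of_apply, id_eq,
      Fin.coe_castLE, Matrix.mulVec, dotProduct]
    apply Finset.sum_congr rfl
    intro l _
    rw [dif_pos jj.isLt]
  have hT : (N₁ᵀ : Matrix (Fin k) (Fin m) ℝ)
      = Matrix.of fun jj ii => A.mulVec (u jj) ii := by
    ext jj ii
    simp [Matrix.transpose_apply, hNt]
  have hTrank : N₁ᵀ.rank = k := by
    rw [hT]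
    have hli : LinearIndependent ℝ (Matrix.of fun jj ii => A.mulVec (u jj) ii) := hind
    simpa using hli.rank_matrix
  rw [← Matrix.rank_transpose, hTrank]


end GaussianQRAux

end

open GaussianQRAux

/-- If A is a fixed real m×n matrix of rank k and G is a standard Gaussian n×n matrix,
then with probability 1: G is invertible, and for every QR factorization G = QR with Q
orthogonal and R upper triangular, the matrix B = A·Q has rank k and its first k
columns are linearly independent. -/
theorem gaussian_qr_sample_matrix_rank
    {m n : ℕ} (A : Matrix (Fin m) (Fin n) ℝ) (k : ℕ) (hA : A.rank = k) :
    ∀ᵐ g ∂(Measure.pi fun _ : Fin n => Measure.pi fun _ : Fin n => gaussianReal 0 1),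
      IsUnit (Matrix.of g) ∧
      ∀ Q R : Matrix (Fin n) (Fin n) ℝ, Qᵀ * Q = 1 →
        (∀ i j : Fin n, (j : ℕ) < (i : ℕ) → R i j = 0) →
        Matrix.of g = Q * R →
        (A * Q).rank = k ∧
        ((A * Q).submatrix id
            (Fin.castLE (show k ≤ n by
              rw [← hA]; simpa using A.rank_le_card_width))).rank = k := by
  classical
  have hkn : k ≤ n := by rw [← hA]; simpa using A.rank_le_card_width
  set XM : Matrix (Fin n) (Fin n) (MvPolynomial (Fin n × Fin n) ℝ) :=
    Matrix.of fun i j => MvPolynomial.X (i, j) with hXM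
  set NP : Matrix (Fin m) (Fin k) (MvPolynomial (Fin n × Fin n) ℝ) :=
    (A.map MvPolynomial.C) * (XM.submatrix id (Fin.castLE hkn)) with hNP
  set p : MvPolynomial (Fin n × Fin n) ℝ := XM.det * (NPᵀ * NP).det with hpdef
  -- evaluation facts
  have hXMmap : ∀ g : Fin n → Fin n → ℝ,
      XM.map (MvPolynomial.eval (fun q : Fin n × Fin n => g q.1 q.2)) = Matrix.of g := by
    intro g; ext i j; simp [hXM]
  have hNPmap : ∀ g : Fin n → Fin n → ℝ,
      NP.map (MvPolynomial.eval (fun q : Fin n × Fin n => g q.1 q.2))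
        = A * (Matrix.of g).submatrix id (Fin.castLE hkn) := by
    intro g
    erw [hNP, Matrix.map_mul]
    congr 1
    · ext i j; simp
    · ext i j
      simp only [Matrix.map_apply, Matrix.submatrix_apply, hXM, Matrix.of_apply, id_eq,
        MvPolynomial.eval_X]
  have heval : ∀ g : Fin n → Fin n → ℝ,
      MvPolynomial.eval (fun q : Fin n × Fin n => g q.1 q.2) p
        = (Matrix.of g).det *
          ((A * (Matrix.of g).submatrix id (Fin.castLE hkn))ᵀ *
            (A * (Matrix.of g).submatrix id (Fin.castLE hkn))).det := by
    intro g
    rw [hpdef, _root_.map_mul]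
    congr 1
    · rw [RingHom.map_det]
      congr 1
      rw [RingHom.mapMatrix_apply, hXMmap]
    · rw [RingHom.map_det]
      congr 1
      rw [RingHom.mapMatrix_apply, Matrix.map_mul, Matrix.transpose_map, hNPmap]
  -- the polynomial is nonzero
  have hXMdet : XM.det ≠ 0 := by
    intro h
    have h1 := congrArg (MvPolynomial.eval
      (fun q : Fin n × Fin n => (1 : Matrix (Fin n) (Fin n) ℝ) q.1 q.2)) h
    rw [map_zero, RingHom.map_det, RingHom.mapMatrix_apply, hXMmap (1 : Matrix (Fin n) (Fin n) ℝ)] at h1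
    have : Matrix.of (fun i j => (1 : Matrix (Fin n) (Fin n) ℝ) i j)
        = (1 : Matrix (Fin n) (Fin n) ℝ) := rfl
    rw [this, det_one] at h1
    exact one_ne_zero h1
  have hNPdet : (NPᵀ * NP).det ≠ 0 := by
    obtain ⟨g₀, hg₀⟩ := exists_good A hkn hA
    intro h
    have h1 := congrArg (MvPolynomial.eval
      (fun q : Fin n × Fin n => g₀ q.1 q.2)) h
    rw [map_zero, RingHom.map_det, RingHom.mapMatrix_apply, Matrix.map_mul,
      Matrix.transpose_map, hNPmap] at h1
    set N₁ := A * (Matrix.of g₀).submatrix id (Fin.castLE hkn)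
    have hrk : (N₁ᵀ * N₁).rank = k := by
      rw [Matrix.rank_transpose_mul_self]; exact hg₀
    exact isUnit_iff_ne_zero.mp (isUnit_det_of_rank_eq _ hrk) h1
  have hpne : p ≠ 0 := mul_ne_zero hXMdet hNPdet
  have hnull := nested_null p hpne
  have hev : ∀ᵐ g ∂(Measure.pi fun _ : Fin n => Measure.pi fun _ : Fin n =>
      gaussianReal 0 1), MvPolynomial.eval (fun q : Fin n × Fin n => g q.1 q.2) p ≠ 0 := by
    rw [ae_iff]
    simpa only [ne_eq, not_not] using hnull
  filter_upwards [hev] with g hg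
  rw [heval g] at hg
  have hdet : (Matrix.of g).det ≠ 0 := left_ne_zero_of_mul hg
  have hd2 := right_ne_zero_of_mul hg
  have hrank : (A * (Matrix.of g).submatrix id (Fin.castLE hkn)).rank = k := by
    set N₁ := A * (Matrix.of g).submatrix id (Fin.castLE hkn) with hN₁
    have hu : IsUnit (N₁ᵀ * N₁) :=
      (Matrix.isUnit_iff_isUnit_det _).mpr (isUnit_iff_ne_zero.mpr hd2)
    have h3 := Matrix.rank_of_isUnit _ hu
    rw [← Matrix.rank_transpose_mul_self N₁, h3, Fintype.card_fin]
  exact deterministic A hkn hA g hdet hrank
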